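/- Let U and Ũ be supermartingales on [0,T] with Ũ_t ≤ U_t a.s. and, for all t < u, E(U_u | F_t) ≤ Ũ_t. Then the set of times t for which E(U_t) > E(Ũ_t) is countable, and for every t outside this set, U_t = Ũ_t almost surely. -/
import Mathlib


open MeasureTheory Filter

/-- Let `U` and `Ũ` (here `V`) be supermartingales with `V_t ≤ U_t` a.s. and
`E(U_u | F_t) ≤ V_t` a.s. for all `t < u`. Then the set of times `t` for which
`E(V_t) < E(U_t)` is countable, and for every `t` outside this set,
`U_t = V_t` almost surely. -/
theorem sandwiched_supermartingales_countable_exceptional_set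
    {Ω : Type*} {m0 : MeasurableSpace Ω}
    (μ : Measure Ω) [IsProbabilityMeasure μ]
    (ℱ : Filtration ℝ m0) (U V : ℝ → Ω → ℝ)
    (hU : Supermartingale U ℱ μ) (hV : Supermartingale V ℱ μ)
    (hle : ∀ t : ℝ, V t ≤ᵐ[μ] U t)
    (hsw : ∀ t u : ℝ, t < u → μ[U u|ℱ t] ≤ᵐ[μ] V t) :
    Set.Countable {t : ℝ | ∫ ω, V t ω ∂μ < ∫ ω, U t ω ∂μ} ∧
    ∀ t ∉ {t : ℝ | ∫ ω, V t ω ∂μ < ∫ ω, U t ω ∂μ}, U t =ᵐ[μ] V t := by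
  set f : ℝ → ℝ := fun t => ∫ ω, U t ω ∂μ with hf
  set g : ℝ → ℝ := fun t => ∫ ω, V t ω ∂μ with hg
  have hfg : ∀ t, g t ≤ f t := fun t =>
    integral_mono_ae (hV.integrable t) (hU.integrable t) (hle t)
  have hfa : Antitone f := by
    intro s t hst
    calc f t = ∫ ω, (μ[U t|ℱ s]) ω ∂μ := (integral_condExp (ℱ.le s)).symm
    _ ≤ f s := integral_mono_ae integrable_condExp (hU.integrable s) (hU.2.1 s t hst)
  have hsand : ∀ t u : ℝ, t < u → f u ≤ g t := by
    intro t u htu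
    calc f u = ∫ ω, (μ[U u|ℱ t]) ω ∂μ := (integral_condExp (ℱ.le t)).symm
    _ ≤ g t := integral_mono_ae integrable_condExp (hV.integrable t) (hsw t u htu)
  have hsub : {t : ℝ | g t < f t} ⊆ {t : ℝ | ¬ ContinuousAt f t} := by
    intro t ht
    simp only [Set.mem_setOf_eq] at ht ⊢
    intro hc
    have h1 : Tendsto f (nhdsWithin t (Set.Ioi t)) (nhds (f t)) :=
      hc.continuousWithinAt.tendsto
    have h2 : f t ≤ g t := by
      refine le_of_tendsto h1 ?_
      filter_upwards [self_mem_nhdsWithin] with u hu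
      exact hsand t u hu
    exact absurd (lt_of_lt_of_le ht h2) (lt_irrefl _)
  refine ⟨(hfa.countable_not_continuousAt).mono hsub, ?_⟩
  intro t ht
  simp only [Set.mem_setOf_eq, not_lt] at ht
  have heq : ∫ ω, (U t - V t) ω ∂μ = 0 := by
    simp only [Pi.sub_apply]
    rw [integral_sub (hU.integrable t) (hV.integrable t)]
    have := hfg t
    linarith
  have hnn : 0 ≤ᵐ[μ] (U t - V t) := by
    filter_upwards [hle t] with ω hω
    simpa [Pi.sub_apply] using sub_nonneg.mpr hω
  have h0 : (U t - V t) =ᵐ[μ] 0 := by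
    rwa [integral_eq_zero_iff_of_nonneg_ae hnn
      ((hU.integrable t).sub (hV.integrable t))] at heq
  filter_upwards [h0] with ω hω
  have : U t ω - V t ω = 0 := hω
  linarith
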